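/- The number of states of the existential region automaton of an ECTA A with m locations, alphabet Σ and maximal constant cmax is at most m · R(2|Σ|, cmax+1), where R(n,c) = n! · 2^n · (2c+2)^n; in particular the existential region automaton is a finite automaton. -/

import Mathlib

/-- Event clocks over alphabet `α`: a history clock and a prophecy clock per letter. -/
inductive Clock (α : Type) where
  | hist (a : α)
  | proph (a : α)
deriving DecidableEq

/-- A valuation assigns to each event clock a real value or `⊥` (here `none`). -/
def Val (α : Type) := Clock α → Option ℝ

/-- All defined clock values are nonnegative. -/
def Nonneg {α : Type} (v : Val α) : Prop := ∀ x r, v x = some r → 0 ≤ r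

/-- `v[x := d]`. -/
def Val.set {α : Type} [DecidableEq α] (v : Val α) (x : Clock α) (d : Option ℝ) : Val α :=
  fun y => if y = x then d else v y

/-- Time elapse: history clocks increase, prophecy clocks decrease; `⊥` unaffected. -/
def elapse {α : Type} (v : Val α) (t : ℝ) : Val α := fun c =>
  match c with
  | .hist a => (v (.hist a)).map (· + t)
  | .proph a => (v (.proph a)).map (· - t)

/-- Time elapse by `t` is allowed: `t ≥ 0` and all prophecy clocks are at least `t`. -/
def CanElapse {α : Type} (v : Val α) (t : ℝ) : Prop :=
  0 ≤ t ∧ ∀ a r, v (.proph a) = some r → t ≤ r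

def InitialVal {α : Type} (v : Val α) : Prop := ∀ a, v (.hist a) = none

def FinalVal {α : Type} (v : Val α) : Prop := ∀ a, v (.proph a) = none

/-- Clock constraints: Boolean combinations of atomic constraints `x ∼ c`. -/
inductive Constr (α : Type) where
  | tt
  | lt (x : Clock α) (c : ℕ)
  | gt (x : Clock α) (c : ℕ)
  | eq (x : Clock α) (c : ℕ)
  | not (ψ : Constr α)
  | and (ψ₁ ψ₂ : Constr α)

def Constr.sat {α : Type} (v : Val α) : Constr α → Prop
  | .tt => True
  | .lt x c => ∃ r, v x = some r ∧ r < (c : ℝ)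
  | .gt x c => ∃ r, v x = some r ∧ (c : ℝ) < r
  | .eq x c => v x = some (c : ℝ)
  | .not ψ => ¬ Constr.sat v ψ
  | .and ψ₁ ψ₂ => Constr.sat v ψ₁ ∧ Constr.sat v ψ₂

/-- An event-clock automaton. -/
structure ECTA (α Q : Type) where
  init : Q
  edges : Set (Q × α × Constr α × Q)
  accept : Set Q

/-- Discrete step on letter `σ`: there is a nonnegative valuation `v̄` with
`v̄[→σ := 0] = v`, `v̄[←σ := 0] = v'` and `v̄ ⊨ ψ` for some edge `(q,σ,ψ,q')`. -/
def DStep {α Q : Type} [DecidableEq α] (A : ECTA α Q) (q : Q) (v : Val α) (σ : α)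
    (q' : Q) (v' : Val α) : Prop :=
  ∃ ψ, (q, σ, ψ, q') ∈ A.edges ∧
    ∃ vb : Val α, Nonneg vb ∧
      vb.set (.proph σ) (some 0) = v ∧
      vb.set (.hist σ) (some 0) = v' ∧
      Constr.sat vb ψ

/-- Combined step: elapse `t`, then fire a `σ`-edge. -/
def TStep {α Q : Type} [DecidableEq α] (A : ECTA α Q) (q : Q) (v : Val α) (t : ℝ) (σ : α)
    (q' : Q) (v' : Val α) : Prop :=
  CanElapse v t ∧ DStep A q (elapse v t) σ q' v'

/-- Acceptance of a timed word (given by successive delays) from state `(q,v)`. -/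
inductive ECAcc {α Q : Type} [DecidableEq α] (A : ECTA α Q) : Q → Val α → List (ℝ × α) → Prop where
  | nil : ∀ q v, q ∈ A.accept → FinalVal v → ECAcc A q v []
  | cons : ∀ q v t σ q' v' w, TStep A q v t σ q' v' → ECAcc A q' v' w → ECAcc A q v ((t, σ) :: w)

/-- `Untime(L(A,(q,v)))`. -/
def UntimedLangFrom {α Q : Type} [DecidableEq α] (A : ECTA α Q) (q : Q) (v : Val α) :
    Set (List α) :=
  { w | ∃ θ : List (ℝ × α), ECAcc A q v θ ∧ θ.map Prod.snd = w }

/-- The timed language of `A` (initialized runs). -/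
def TLang {α Q : Type} [DecidableEq α] (A : ECTA α Q) : Set (List (ℝ × α)) :=
  { θ | ∃ v, Nonneg v ∧ InitialVal v ∧ ECAcc A A.init v θ }

/-- `Untime(L(A))`. -/
def UntimedLang {α Q : Type} [DecidableEq α] (A : ECTA α Q) : Set (List α) :=
  { w | ∃ v, Nonneg v ∧ InitialVal v ∧ w ∈ UntimedLangFrom A A.init v }
/-- Distance to the relevant integer boundary: `⌈r⌉ − r` for history clocks,
`r − ⌊r⌋` for prophecy clocks. -/
noncomputable def fracDist {α : Type} : Clock α → ℝ → ℝ
  | .hist _, r => (⌈r⌉ : ℝ) - r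
  | .proph _, r => r - (⌊r⌋ : ℝ)

/-- Signed value used for diagonal constraints: prophecy clocks are negated. -/
def sval {α : Type} : Clock α → ℝ → ℝ
  | .hist _, r => r
  | .proph _, r => -r

/-- The Alur–Dill region equivalence with maximal constant `cmax`. -/
def RegEq {α : Type} (cmax : ℕ) (v₁ v₂ : Val α) : Prop :=
  (∀ x, v₁ x = none ↔ v₂ x = none) ∧
  (∀ x r₁ r₂, v₁ x = some r₁ → v₂ x = some r₂ →
      (((cmax : ℝ) < r₁ ∧ (cmax : ℝ) < r₂) ∨ (⌈r₁⌉ = ⌈r₂⌉ ∧ ⌊r₁⌋ = ⌊r₂⌋))) ∧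
  (∀ x y rx₁ ry₁ rx₂ ry₂, v₁ x = some rx₁ → v₁ y = some ry₁ →
      v₂ x = some rx₂ → v₂ y = some ry₂ → rx₁ ≤ (cmax : ℝ) → ry₁ ≤ (cmax : ℝ) →
      (fracDist x rx₁ ≤ fracDist y ry₁ ↔ fracDist x rx₂ ≤ fracDist y ry₂))

/-- The refined (Bouyer-style) region equivalence. -/
def RegEqD {α : Type} (cmax : ℕ) (v₁ v₂ : Val α) : Prop :=
  RegEq cmax v₁ v₂ ∧
  (∀ x y rx₁ ry₁ rx₂ ry₂, v₁ x = some rx₁ → v₁ y = some ry₁ →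
      v₂ x = some rx₂ → v₂ y = some ry₂ →
      ((cmax : ℝ) < rx₁ ∨ (cmax : ℝ) < ry₁) →
      ((2 * (cmax : ℝ) < |sval x rx₁ - sval y ry₁| ∧ 2 * (cmax : ℝ) < |sval x rx₂ - sval y ry₂|) ∨
       (⌊sval x rx₁ - sval y ry₁⌋ = ⌊sval x rx₂ - sval y ry₂⌋ ∧
        ⌈sval x rx₁ - sval y ry₁⌉ = ⌈sval x rx₂ - sval y ry₂⌉)))

/-- A region of an equivalence `E`: an equivalence class of nonnegative valuations. -/
def IsRegionOf {α : Type} (E : Val α → Val α → Prop) (r : Set (Val α)) : Prop :=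
  ∃ v, Nonneg v ∧ r = { v' | Nonneg v' ∧ E v v' }

def InitialRegion {α : Type} (r : Set (Val α)) : Prop := ∀ v ∈ r, InitialVal v
def FinalRegion {α : Type} (r : Set (Val α)) : Prop := ∀ v ∈ r, FinalVal v

/-- Acceptance in the universal region automaton `RA(∀,E,A)`. -/
inductive UAcc {α Q : Type} [DecidableEq α] (A : ECTA α Q) (E : Val α → Val α → Prop) :
    Q → Set (Val α) → List α → Prop where
  | nil : ∀ q r, q ∈ A.accept → IsRegionOf E r → FinalRegion r → UAcc A E q r []
  | cons : ∀ q r σ q' r' w, IsRegionOf E r → IsRegionOf E r' →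
      (∀ v ∈ r, ∃ t v', v' ∈ r' ∧ TStep A q v t σ q' v') →
      UAcc A E q' r' w → UAcc A E q r (σ :: w)

/-- Acceptance in the existential region automaton `RA(∃,E,A)`. -/
inductive EAcc {α Q : Type} [DecidableEq α] (A : ECTA α Q) (E : Val α → Val α → Prop) :
    Q → Set (Val α) → List α → Prop where
  | nil : ∀ q r, q ∈ A.accept → IsRegionOf E r → FinalRegion r → EAcc A E q r []
  | cons : ∀ q r σ q' r' w, IsRegionOf E r → IsRegionOf E r' →
      (∃ v ∈ r, ∃ t v', v' ∈ r' ∧ TStep A q v t σ q' v') →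
      EAcc A E q' r' w → EAcc A E q r (σ :: w)

/-- The language of the universal region automaton. -/
def ULang {α Q : Type} [DecidableEq α] (A : ECTA α Q) (E : Val α → Val α → Prop) :
    Set (List α) :=
  { w | ∃ r, IsRegionOf E r ∧ InitialRegion r ∧ UAcc A E A.init r w }

/-- The language of the existential region automaton. -/
def ELang {α Q : Type} [DecidableEq α] (A : ECTA α Q) (E : Val α → Val α → Prop) :
    Set (List α) :=
  { w | ∃ r, IsRegionOf E r ∧ InitialRegion r ∧ EAcc A E A.init r w }

/-- All constants in a constraint are at most `k`. -/
def Constr.BoundedBy {α : Type} (k : ℕ) : Constr α → Prop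
  | .tt => True
  | .lt _ c => c ≤ k
  | .gt _ c => c ≤ k
  | .eq _ c => c ≤ k
  | .not ψ => Constr.BoundedBy k ψ
  | .and ψ₁ ψ₂ => Constr.BoundedBy k ψ₁ ∧ Constr.BoundedBy k ψ₂

/-- `cmax` bounds all constants appearing in the guards of `A`. -/
def MaxConstLe {α Q : Type} (A : ECTA α Q) (k : ℕ) : Prop :=
  ∀ e ∈ A.edges, Constr.BoundedBy k e.2.2.1

/-- `R(n,c) = n! · 2ⁿ · (2c+2)ⁿ`, the Alur–Dill bound on the number of regions. -/
def Rbound (n c : ℕ) : ℕ := n.factorial * 2 ^ n * (2 * c + 2) ^ n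

section AuxRegionCount

open scoped Classical

/-- `Clock α` is equivalent to `α ⊕ α`. -/
def clockEquivSum (α : Type) : Clock α ≃ α ⊕ α where
  toFun c := match c with | .hist a => .inl a | .proph a => .inr a
  invFun s := match s with | .inl a => .hist a | .inr a => .proph a
  left_inv c := by cases c <;> rfl
  right_inv s := by cases s <;> rfl

noncomputable instance instFintypeClock (α : Type) [Fintype α] : Fintype (Clock α) :=
  Fintype.ofEquiv _ (clockEquivSum α).symm

lemma card_clock (α : Type) [Fintype α] :
    Fintype.card (Clock α) = 2 * Fintype.card α := by
  rw [Fintype.card_congr (clockEquivSum α), Fintype.card_sum]; ring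

variable {α : Type} [DecidableEq α] [Fintype α]

/-- Total fractional-distance function (junk value `0` on undefined clocks). -/
noncomputable def fd (v : Val α) (x : Clock α) : ℝ := fracDist x ((v x).getD 0)

noncomputable def eClk (α : Type) [DecidableEq α] [Fintype α] :
    Clock α ≃ Fin (Fintype.card (Clock α)) := Fintype.equivFin _

/-- Strict lexicographic key order: first by `fd`, ties broken by `eClk`. -/
def ltkey (v : Val α) (x y : Clock α) : Prop :=
  fd v x < fd v y ∨ (fd v x = fd v y ∧ eClk α x < eClk α y)

lemma ltkey_irrefl (v : Val α) (x : Clock α) : ¬ ltkey v x x := by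
  rintro (h | ⟨_, h⟩) <;> exact lt_irrefl _ h

lemma ltkey_trans {v : Val α} {x y z : Clock α}
    (h1 : ltkey v x y) (h2 : ltkey v y z) : ltkey v x z := by
  rcases h1 with h1 | ⟨h1, h1'⟩ <;> rcases h2 with h2 | ⟨h2, h2'⟩
  · exact Or.inl (h1.trans h2)
  · exact Or.inl (h2 ▸ h1)
  · exact Or.inl (h1 ▸ h2)
  · exact Or.inr ⟨h1.trans h2, h1'.trans h2'⟩

lemma ltkey_total {v : Val α} {x y : Clock α} (h : x ≠ y) :
    ltkey v x y ∨ ltkey v y x := by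
  rcases lt_trichotomy (fd v x) (fd v y) with hf | hf | hf
  · exact Or.inl (Or.inl hf)
  · rcases lt_trichotomy (eClk α x) (eClk α y) with he | he | he
    · exact Or.inl (Or.inr ⟨hf, he⟩)
    · exact absurd ((eClk α).injective he) h
    · exact Or.inr (Or.inr ⟨hf.symm, he⟩)
  · exact Or.inr (Or.inl hf)

/-- Rank of a clock under the key order. -/
noncomputable def rk (v : Val α) (x : Clock α) : ℕ :=
  (Finset.univ.filter (fun z => ltkey v z x)).card

lemma rk_lt_card (v : Val α) (x : Clock α) : rk v x < Fintype.card (Clock α) := by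
  rw [← Finset.card_univ]
  apply Finset.card_lt_card
  refine Finset.ssubset_iff_of_subset (Finset.filter_subset _ _) |>.mpr ?_
  exact ⟨x, Finset.mem_univ x, by simp [ltkey_irrefl]⟩

lemma ltkey_iff_rk {v : Val α} {x y : Clock α} :
    ltkey v x y ↔ rk v x < rk v y := by
  constructor
  · intro h
    apply Finset.card_lt_card
    constructor
    · intro z hz
      simp only [Finset.mem_filter, Finset.mem_univ, true_and] at hz ⊢
      exact ltkey_trans hz h
    · intro hsub
      have := hsub (by simp [h] : x ∈ Finset.univ.filter (fun z => ltkey v z y))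
      simp [ltkey_irrefl] at this
  · intro h
    by_cases hxy : x = y
    · subst hxy; exact absurd h (lt_irrefl _)
    rcases ltkey_total hxy with h' | h'
    · exact h'
    · have h2 : rk v y < rk v x := by
        apply Finset.card_lt_card
        constructor
        · intro z hz
          simp only [Finset.mem_filter, Finset.mem_univ, true_and] at hz ⊢
          exact ltkey_trans hz h'
        · intro hsub
          have := hsub (by simp [h'] : y ∈ Finset.univ.filter (fun z => ltkey v z x))
          simp [ltkey_irrefl] at this
      omega

lemma rk_inj {v : Val α} {x y : Clock α} (h : rk v x = rk v y) : x = y := by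
  by_contra hxy
  rcases ltkey_total (v := v) hxy with h' | h' <;>
    · have := ltkey_iff_rk.mp h'; omega

/-- Is `x` the `eClk`-least clock in its `fd`-class? -/
noncomputable def bsig (v : Val α) (x : Clock α) : Bool :=
  decide (∀ z, fd v z = fd v x → eClk α x ≤ eClk α z)

/-- Integral-part signature of each clock value. -/
noncomputable def gsig (cmax : ℕ) (v : Val α) (x : Clock α) :
    Option (Option (Fin (cmax + 1) × Bool)) :=
  (v x).map fun r =>
    if (cmax : ℝ) < r then none
    else some (⟨min ⌈r⌉.toNat cmax, Nat.lt_succ_of_le (min_le_right _ _)⟩,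
      decide (⌈r⌉ = ⌊r⌋))

lemma gsig_none_iff {cmax : ℕ} {v w : Val α} {x : Clock α}
    (h : gsig cmax v x = gsig cmax w x) : v x = none ↔ w x = none := by
  unfold gsig at h
  cases hv : v x <;> cases hw : w x <;> simp [hv, hw] at h ⊢

lemma gsig_cases {cmax : ℕ} {v w : Val α} {x : Clock α} {rv rw : ℝ}
    (h : gsig cmax v x = gsig cmax w x) (hv : v x = some rv) (hw : w x = some rw)
    (h0v : 0 ≤ rv) (h0w : 0 ≤ rw) :
    ((cmax : ℝ) < rv ∧ (cmax : ℝ) < rw) ∨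
      (rv ≤ cmax ∧ rw ≤ cmax ∧ ⌈rv⌉ = ⌈rw⌉ ∧ ⌊rv⌋ = ⌊rw⌋) := by
  unfold gsig at h
  rw [hv, hw] at h
  simp only [Option.map_some, Option.some.injEq] at h
  by_cases h1 : (cmax : ℝ) < rv <;> by_cases h2 : (cmax : ℝ) < rw
  · exact Or.inl ⟨h1, h2⟩
  · rw [if_pos h1, if_neg h2] at h; exact absurd h (by simp)
  · rw [if_neg h1, if_pos h2] at h; exact absurd h (by simp)
  · rw [if_neg h1, if_neg h2, Option.some.injEq, Prod.mk.injEq, Fin.mk.injEq,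
      decide_eq_decide] at h
    push_neg at h1 h2
    right
    refine ⟨h1, h2, ?_⟩
    obtain ⟨hfin, hdec⟩ := h
    have hclv : ⌈rv⌉ ≤ (cmax : ℤ) := Int.ceil_le.mpr (by exact_mod_cast h1)
    have hclw : ⌈rw⌉ ≤ (cmax : ℤ) := Int.ceil_le.mpr (by exact_mod_cast h2)
    have hnnv : (0 : ℤ) ≤ ⌈rv⌉ := Int.ceil_nonneg h0v
    have hnnw : (0 : ℤ) ≤ ⌈rw⌉ := Int.ceil_nonneg h0w
    rw [min_eq_left (by omega : ⌈rv⌉.toNat ≤ cmax),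
        min_eq_left (by omega : ⌈rw⌉.toNat ≤ cmax)] at hfin
    have hceil : ⌈rv⌉ = ⌈rw⌉ := by omega
    have e1 := Int.ceil_le_floor_add_one rv
    have e2 := Int.ceil_le_floor_add_one rw
    have f1 := Int.floor_le_ceil rv
    have f2 := Int.floor_le_ceil rw
    by_cases hc : ⌈rv⌉ = ⌊rv⌋
    · have hc' := hdec.mp hc
      exact ⟨hceil, by omega⟩
    · have hc' : ¬ ⌈rw⌉ = ⌊rw⌋ := fun hh => hc (hdec.mpr hh)
      exact ⟨hceil, by omega⟩

/-- The rank and tie-flags determine the `fd`-preorder. -/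
lemma fd_le_transfer {v w : Val α} (hrk : ∀ x, rk v x = rk w x)
    (hb : ∀ x, bsig v x = bsig w x) {x y : Clock α}
    (h : fd v x ≤ fd v y) : fd w x ≤ fd w y := by
  have hlt : ∀ a b : Clock α, ltkey v a b ↔ ltkey w a b := by
    intro a b; rw [ltkey_iff_rk, ltkey_iff_rk, hrk a, hrk b]
  by_contra h'
  push_neg at h'
  have hyx_v : ltkey v y x := (hlt y x).mpr (Or.inl h')
  have heq : fd v x = fd v y := by
    rcases hyx_v with h1 | ⟨h1, _⟩
    · linarith
    · exact h1.symm
  have heyx : eClk α y < eClk α x := by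
    rcases hyx_v with h1 | ⟨_, h1⟩
    · linarith
    · exact h1
  -- the eClk-minimal element of the `fd w`-class of `x`
  obtain ⟨z, hzmem, hzmin⟩ := Finset.exists_min_image
    (Finset.univ.filter (fun z => fd w z = fd w x)) (fun z => eClk α z)
    ⟨x, by simp⟩
  simp only [Finset.mem_filter, Finset.mem_univ, true_and] at hzmem
  have hzmin' : ∀ z', fd w z' = fd w x → eClk α z ≤ eClk α z' := by
    intro z' hz'
    exact hzmin z' (by simp [hz'])
  have hbwz : bsig w z = true := by
    apply decide_eq_true
    intro z' hz'
    exact hzmin' z' (hz'.trans hzmem)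
  have hbvz : ∀ z', fd v z' = fd v z → eClk α z ≤ eClk α z' :=
    of_decide_eq_true ((hb z).trans hbwz)
  by_cases hzx : z = x
  · subst hzx
    exact absurd (hbvz y heq.symm) (not_le.mpr heyx)
  · have hezx : eClk α z < eClk α x :=
      lt_of_le_of_ne (hzmin' x rfl) (fun hh => hzx ((eClk α).injective hh))
    have hzxv : ltkey v z x := (hlt z x).mpr (Or.inr ⟨hzmem, hezx⟩)
    have hyzv : ltkey v y z := (hlt y z).mpr (Or.inl (hzmem ▸ h'))
    have hfzx : fd v z ≤ fd v x := by
      rcases hzxv with h1 | ⟨h1, _⟩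
      · exact le_of_lt h1
      · exact le_of_eq h1
    have hfyz : fd v y ≤ fd v z := by
      rcases hyzv with h1 | ⟨h1, _⟩
      · exact le_of_lt h1
      · exact le_of_eq h1
    have hfeq : fd v z = fd v y := le_antisymm (heq ▸ hfzx) hfyz
    have hez : eClk α z ≤ eClk α y := hbvz y hfeq.symm
    rcases hyzv with h1 | ⟨_, h1⟩
    · rw [hfeq] at h1; exact lt_irrefl _ h1
    · exact absurd hez (not_le.mpr h1)

lemma fd_le_iff {v w : Val α} (hrk : ∀ x, rk v x = rk w x)
    (hb : ∀ x, bsig v x = bsig w x) (x y : Clock α) :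
    fd v x ≤ fd v y ↔ fd w x ≤ fd w y :=
  ⟨fd_le_transfer hrk hb,
   fd_le_transfer (fun a => (hrk a).symm) (fun a => (hb a).symm)⟩

lemma regEq_transfer {cmax : ℕ} {v w : Val α} (hv : Nonneg v) (hw : Nonneg w)
    (hg : ∀ x, gsig cmax v x = gsig cmax w x) (hrk : ∀ x, rk v x = rk w x)
    (hb : ∀ x, bsig v x = bsig w x) (u : Val α) (h : RegEq cmax v u) :
    RegEq cmax w u := by
  obtain ⟨h1, h2, h3⟩ := h
  refine ⟨?_, ?_, ?_⟩
  · intro x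
    rw [← gsig_none_iff (hg x)]
    exact h1 x
  · intro x rwx ru hwx hux
    obtain ⟨rvx, hvx⟩ : ∃ r, v x = some r := by
      cases hvxc : v x with
      | none => exact absurd (((gsig_none_iff (hg x)).mp hvxc).symm ▸ hwx) (by simp)
      | some r => exact ⟨r, rfl⟩
    rcases gsig_cases (hg x) hvx hwx (hv x rvx hvx) (hw x rwx hwx) with
      ⟨hbig1, hbig2⟩ | ⟨hs1, hs2, hceil, hfloor⟩
    · rcases h2 x rvx ru hvx hux with ⟨_, hbu⟩ | ⟨hcu, _⟩
      · exact Or.inl ⟨hbig2, hbu⟩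
      · left
        refine ⟨hbig2, ?_⟩
        have hc1 : (cmax : ℤ) < ⌈rvx⌉ := Int.lt_ceil.mpr (by exact_mod_cast hbig1)
        have hc2 : (cmax : ℤ) < ⌈ru⌉ := hcu ▸ hc1
        have hc3 : (⌈ru⌉ : ℝ) < ru + 1 := Int.ceil_lt_add_one ru
        have hc4 : ((cmax : ℤ) : ℝ) + 1 ≤ (⌈ru⌉ : ℝ) := by exact_mod_cast hc2
        push_cast at hc4
        linarith
    · rcases h2 x rvx ru hvx hux with ⟨hbv, _⟩ | ⟨hcu, hfu⟩
      · linarith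
      · exact Or.inr ⟨hceil ▸ hcu, hfloor ▸ hfu⟩
  · intro x y rxw ryw rxu ryu hwx hwy hux huy hx hy
    obtain ⟨rxv, hvx⟩ : ∃ r, v x = some r := by
      cases hvxc : v x with
      | none => exact absurd (((gsig_none_iff (hg x)).mp hvxc).symm ▸ hwx) (by simp)
      | some r => exact ⟨r, rfl⟩
    obtain ⟨ryv, hvy⟩ : ∃ r, v y = some r := by
      cases hvyc : v y with
      | none => exact absurd (((gsig_none_iff (hg y)).mp hvyc).symm ▸ hwy) (by simp)
      | some r => exact ⟨r, rfl⟩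
    have hxsmall : rxv ≤ (cmax : ℝ) := by
      rcases gsig_cases (hg x) hvx hwx (hv x rxv hvx) (hw x rxw hwx) with
        ⟨_, hb2⟩ | ⟨hs1, _, _, _⟩
      · linarith
      · exact hs1
    have hysmall : ryv ≤ (cmax : ℝ) := by
      rcases gsig_cases (hg y) hvy hwy (hv y ryv hvy) (hw y ryw hwy) with
        ⟨_, hb2⟩ | ⟨hs1, _, _, _⟩
      · linarith
      · exact hs1
    have h3' := h3 x y rxv ryv rxu ryu hvx hvy hux huy hxsmall hysmall
    have hfdvx : fd v x = fracDist x rxv := by simp [fd, hvx]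
    have hfdvy : fd v y = fracDist y ryv := by simp [fd, hvy]
    have hfdwx : fd w x = fracDist x rxw := by simp [fd, hwx]
    have hfdwy : fd w y = fracDist y ryw := by simp [fd, hwy]
    have horder := fd_le_iff hrk hb x y
    rw [hfdvx, hfdvy, hfdwx, hfdwy] at horder
    rw [← horder]
    exact h3'

/-- The finite signature type. -/
def SigT (α : Type) [DecidableEq α] [Fintype α] (cmax : ℕ) : Type :=
  (Clock α ↪ Fin (Fintype.card (Clock α))) × (Clock α → Bool) ×
    (Clock α → Option (Option (Fin (cmax + 1) × Bool)))

noncomputable instance (cmax : ℕ) : Fintype (SigT α cmax) := by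
  unfold SigT; infer_instance

noncomputable def sigOf (cmax : ℕ) (v : Val α) : SigT α cmax :=
  (⟨fun x => ⟨rk v x, rk_lt_card v x⟩,
    fun a b hab => rk_inj (Fin.mk.injEq _ _ _ _ ▸ hab : rk v a = rk v b)⟩,
   bsig v, gsig cmax v)

lemma sig_eq_region_eq {cmax : ℕ} {v w : Val α} (hv : Nonneg v) (hw : Nonneg w)
    (hs : sigOf cmax v = sigOf cmax w) :
    { u | Nonneg u ∧ RegEq cmax v u } = { u | Nonneg u ∧ RegEq cmax w u } := by
  have hrk : ∀ x, rk v x = rk w x := by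
    intro x
    have := congrArg (fun s : SigT α cmax => (s.1 x : ℕ)) hs
    exact this
  have hb : ∀ x, bsig v x = bsig w x := by
    intro x
    have := congrArg (fun s : SigT α cmax => s.2.1 x) hs
    simpa [sigOf] using this
  have hg : ∀ x, gsig cmax v x = gsig cmax w x := by
    intro x
    have := congrArg (fun s : SigT α cmax => s.2.2 x) hs
    simpa [sigOf] using this
  ext u
  simp only [Set.mem_setOf_eq]
  constructor
  · rintro ⟨hu, hr⟩
    exact ⟨hu, regEq_transfer hv hw hg hrk hb u hr⟩
  · rintro ⟨hu, hr⟩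
    exact ⟨hu, regEq_transfer hw hv (fun x => (hg x).symm) (fun x => (hrk x).symm)
      (fun x => (hb x).symm) u hr⟩

lemma card_sigT (cmax : ℕ) :
    Fintype.card (SigT α cmax) = Rbound (2 * Fintype.card α) (cmax + 1) := by
  have hn := card_clock α
  unfold SigT Rbound
  rw [Fintype.card_prod, Fintype.card_prod, Fintype.card_embedding_eq,
    Fintype.card_fun, Fintype.card_fun]
  simp only [Fintype.card_fin, Fintype.card_option, Fintype.card_prod,
    Fintype.card_bool, Nat.descFactorial_self, hn]
  ring_nf

end AuxRegionCount

/-- The existential region automaton of an ECTA with `m` locations, alphabet `Σ` and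
maximal constant `cmax` is finite, with at most `m · R(2|Σ|, cmax+1)` states. -/
theorem existential_region_automaton_size
    (α Q : Type) [DecidableEq α] [Fintype α] [Fintype Q] (cmax : ℕ) :
    Finite (Q × { r : Set (Val α) // IsRegionOf (RegEq cmax) r }) ∧
    Nat.card (Q × { r : Set (Val α) // IsRegionOf (RegEq cmax) r }) ≤
      Fintype.card Q * Rbound (2 * Fintype.card α) (cmax + 1) := by
  classical
  set R := { r : Set (Val α) // IsRegionOf (RegEq cmax) r } with hR
  have Fdef : ∀ r : R, Nonneg (Classical.choose r.2) ∧
      r.1 = { v' | Nonneg v' ∧ RegEq cmax (Classical.choose r.2) v' } :=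
    fun r => Classical.choose_spec r.2
  let F : R → SigT α cmax := fun r => sigOf cmax (Classical.choose r.2)
  have Finj : Function.Injective F := by
    intro r1 r2 hF
    have h1 := Fdef r1
    have h2 := Fdef r2
    apply Subtype.ext
    rw [h1.2, h2.2]
    exact sig_eq_region_eq h1.1 h2.1 hF
  have hRfin : Finite R := Finite.of_injective F Finj
  refine ⟨?_, ?_⟩
  · exact Finite.instProd
  · have hcard : Nat.card R ≤ Nat.card (SigT α cmax) :=
      Nat.card_le_card_of_injective F Finj
    rw [Nat.card_eq_fintype_card (α := SigT α cmax), card_sigT] at hcard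
    calc Nat.card (Q × R) = Nat.card Q * Nat.card R := Nat.card_prod _ _
      _ = Fintype.card Q * Nat.card R := by rw [Nat.card_eq_fintype_card (α := Q)]
      _ ≤ Fintype.card Q * Rbound (2 * Fintype.card α) (cmax + 1) :=
          Nat.mul_le_mul_left _ hcard
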